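/- Let G be a subgroup of SL(2,ℂ) such that g h g⁻¹ h⁻¹ ∈ {I, −I} for all g, h ∈ G (i.e., the image of G in PSL(2,ℂ) is abelian), and suppose G has no common eigenvector. Then there exists C ∈ SL(2,ℂ) such that C G C⁻¹ is contained in the quaternion group Q₈ = {±I, ±[[i,0],[0,−i]], ±[[0,1],[−1,0]], ±[[0,i],[i,0]]}, and the image of G in PSL(2,ℂ) has exactly four elements (it is a Klein four-group). -/

import Mathlib

open Matrix

/-- The quaternion group `Q₈` inside `SL(2,ℂ)`, described as a set of matrices:
`±I, ±[[i,0],[0,−i]], ±[[0,1],[−1,0]], ±[[0,i],[i,0]]`. -/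
noncomputable def Q8set : Set (Matrix (Fin 2) (Fin 2) ℂ) :=
  {1, -1,
    !![Complex.I, 0; 0, -Complex.I], -!![Complex.I, 0; 0, -Complex.I],
    !![0, 1; -1, 0], -!![0, 1; -1, 0],
    !![0, Complex.I; Complex.I, 0], -!![0, Complex.I; Complex.I, 0]}

namespace Q8Aux

local notation "M2" => Matrix (Fin 2) (Fin 2) ℂ
local notation "SL2" => Matrix.SpecialLinearGroup (Fin 2) ℂ



lemma mulVec_apply (A : M2) (v : Fin 2 → ℂ) (i : Fin 2) :
    (A *ᵥ v) i = A i 0 * v 0 + A i 1 * v 1 := by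
  simp [Matrix.mulVec, dotProduct, Fin.sum_univ_two]

lemma entries_ne (B : M2) (hB : B ≠ 0) :
    B 0 0 ≠ 0 ∨ B 0 1 ≠ 0 ∨ B 1 0 ≠ 0 ∨ B 1 1 ≠ 0 := by
  by_contra h
  push_neg at h
  exact hB (by ext i j; fin_cases i <;> fin_cases j <;>
    simp [h.1, h.2.1, h.2.2.1, h.2.2.2])

lemma cross_eq_zero (B : M2) (v w : Fin 2 → ℂ) (hB : B ≠ 0)
    (hv : B *ᵥ v = 0) (hw : B *ᵥ w = 0) : v 0 * w 1 - v 1 * w 0 = 0 := by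
  have hv0 := congrFun hv 0
  have hv1 := congrFun hv 1
  have hw0 := congrFun hw 0
  have hw1 := congrFun hw 1
  rw [Q8Aux.mulVec_apply] at hv0 hv1 hw0 hw1
  simp only [Pi.zero_apply] at hv0 hv1 hw0 hw1
  rcases entries_ne B hB with h | h | h | h
  · have key : B 0 0 * (v 0 * w 1 - v 1 * w 0) = 0 := by
      linear_combination w 1 * hv0 - v 1 * hw0
    exact (mul_eq_zero.mp key).resolve_left h
  · have key : B 0 1 * (v 0 * w 1 - v 1 * w 0) = 0 := by
      linear_combination v 0 * hw0 - w 0 * hv0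
    exact (mul_eq_zero.mp key).resolve_left h
  · have key : B 1 0 * (v 0 * w 1 - v 1 * w 0) = 0 := by
      linear_combination w 1 * hv1 - v 1 * hw1
    exact (mul_eq_zero.mp key).resolve_left h
  · have key : B 1 1 * (v 0 * w 1 - v 1 * w 0) = 0 := by
      linear_combination v 0 * hw1 - w 0 * hv1
    exact (mul_eq_zero.mp key).resolve_left h

lemma vec_cases (v : Fin 2 → ℂ) (hv : v ≠ 0) : v 0 ≠ 0 ∨ v 1 ≠ 0 := by
  by_contra h
  push_neg at h
  exact hv (by funext i; fin_cases i <;> simp [h.1, h.2])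

lemma exists_smul_of_cross (v w : Fin 2 → ℂ) (hv : v ≠ 0)
    (hc : v 0 * w 1 - v 1 * w 0 = 0) : ∃ c : ℂ, w = c • v := by
  rcases vec_cases v hv with h0 | h1
  · refine ⟨w 0 / v 0, ?_⟩
    funext i
    fin_cases i
    · simp only [Pi.smul_apply, smul_eq_mul, Fin.zero_eta, Fin.mk_one, Fin.isValue]
      field_simp
    · simp only [Pi.smul_apply, smul_eq_mul, Fin.zero_eta, Fin.mk_one, Fin.isValue]
      field_simp
      linear_combination hc
  · refine ⟨w 1 / v 1, ?_⟩
    funext i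
    fin_cases i
    · simp only [Pi.smul_apply, smul_eq_mul, Fin.zero_eta, Fin.mk_one, Fin.isValue]
      field_simp
      linear_combination -hc
    · simp only [Pi.smul_apply, smul_eq_mul, Fin.zero_eta, Fin.mk_one, Fin.isValue]
      field_simp

lemma trace_eq_zero_of_anticomm (A B : M2) (hB : det B = 1)
    (h : A * B = -(B * A)) : Matrix.trace A = 0 := by
  have h1 : A = -(B * A * adjugate B) := by
    have h2 := congrArg (· * adjugate B) h
    simp only [neg_mul] at h2
    rw [mul_assoc, Matrix.mul_adjugate, hB, one_smul, mul_one] at h2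
    exact h2
  have h2 : Matrix.trace A = -Matrix.trace A := by
    conv_lhs => rw [h1]
    rw [Matrix.trace_neg, Matrix.trace_mul_comm (B * A) (adjugate B),
      ← mul_assoc, Matrix.adjugate_mul, hB, one_smul, one_mul]
  have h3 : (2 : ℂ) * Matrix.trace A = 0 := by linear_combination h2
  exact (mul_eq_zero.mp h3).resolve_left two_ne_zero

lemma sq_eq_neg_one (A : M2) (hdet : det A = 1) (htr : Matrix.trace A = 0) :
    A * A = -1 := by
  have h00 : A 1 1 = -A 0 0 := by
    rw [Matrix.trace_fin_two] at htr
    linear_combination htr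
  have hd : A 0 0 * A 1 1 - A 0 1 * A 1 0 = 1 := by
    rw [← Matrix.det_fin_two]; exact hdet
  ext i j
  fin_cases i <;> fin_cases j <;>
    simp only [Matrix.mul_apply, Fin.sum_univ_two, Matrix.neg_apply, Matrix.one_apply,
      Fin.isValue, ne_eq, zero_ne_one, not_false_eq_true, one_ne_zero, if_true, if_false,
      Fin.mk_zero, Fin.mk_one, neg_zero]
  · linear_combination A 0 0 * h00 - hd
  · linear_combination A 0 1 * h00
  · linear_combination A 1 0 * h00
  · linear_combination A 1 1 * h00 - hd



lemma twoI_ne : (2 * Complex.I : ℂ) ≠ 0 := mul_ne_zero two_ne_zero Complex.I_ne_zero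

lemma eq_zero_of_antiI {x : ℂ} (h : x * Complex.I = -(Complex.I * x)) : x = 0 := by
  have h2 : (2 * Complex.I) * x = 0 := by linear_combination h
  exact (mul_eq_zero.mp h2).resolve_left twoI_ne

lemma eq_zero_of_antiI' {x : ℂ} (h : -(x * Complex.I) = Complex.I * x) : x = 0 := by
  have h2 : (2 * Complex.I) * x = 0 := by linear_combination -h
  exact (mul_eq_zero.mp h2).resolve_left twoI_ne

lemma sq_eq_neg_one_cases {x : ℂ} (h : x * x = -1) : x = Complex.I ∨ x = -Complex.I := by
  have h2 : (x - Complex.I) * (x + Complex.I) = 0 := by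
    linear_combination h - Complex.I_mul_I
  rcases mul_eq_zero.mp h2 with h3 | h3
  · exact Or.inl (sub_eq_zero.mp h3)
  · exact Or.inr (eq_neg_of_add_eq_zero_left h3)

lemma classify (X : M2) (hdet : det X = 1)
    (hA : X * !![Complex.I,0;0,-Complex.I] = !![Complex.I,0;0,-Complex.I] * X ∨
          X * !![Complex.I,0;0,-Complex.I] = -(!![Complex.I,0;0,-Complex.I] * X))
    (hB : X * !![(0:ℂ),-1;1,0] = !![(0:ℂ),-1;1,0] * X ∨
          X * !![(0:ℂ),-1;1,0] = -(!![(0:ℂ),-1;1,0] * X)) :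
    X = 1 ∨ X = -1 ∨
    X = !![Complex.I, 0; 0, -Complex.I] ∨ X = -!![Complex.I, 0; 0, -Complex.I] ∨
    X = !![0, 1; -1, 0] ∨ X = -!![0, 1; -1, 0] ∨
    X = !![0, Complex.I; Complex.I, 0] ∨ X = -!![0, Complex.I; Complex.I, 0] := by
  have hd : X 0 0 * X 1 1 - X 0 1 * X 1 0 = 1 := by
    rw [← Matrix.det_fin_two]; exact hdet
  rcases hA with hA | hA <;> rcases hB with hB | hB
  · -- commutes with both: X = ±1
    have a01 := congrFun (congrFun hA 0) 1
    have a10 := congrFun (congrFun hA 1) 0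
    have b01 := congrFun (congrFun hB 0) 1
    simp only [Matrix.mul_apply, Fin.sum_univ_two, Matrix.neg_apply, Matrix.of_apply,
      Matrix.cons_val', Matrix.cons_val_zero, Matrix.cons_val_one, Matrix.head_cons,
      Matrix.head_fin_const, Matrix.empty_val', Matrix.cons_val_fin_one, mul_zero, zero_mul,
      add_zero, zero_add, mul_one, one_mul, mul_neg, neg_mul, neg_neg, neg_zero]
      at a01 a10 b01
    have h01 : X 0 1 = 0 := eq_zero_of_antiI' a01
    have h10 : X 1 0 = 0 := eq_zero_of_antiI a10
    have h11 : X 1 1 = X 0 0 := by linear_combination b01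
    have hsq : X 0 0 * X 0 0 = 1 := by linear_combination hd - X 0 0 * h11 + X 1 0 * h01
    rcases mul_self_eq_one_iff.mp hsq with h | h
    · refine Or.inl ?_
      ext i j
      fin_cases i <;> fin_cases j <;>
        simp [Matrix.one_apply, h01, h10, h, h11]
    · refine Or.inr (Or.inl ?_)
      ext i j
      fin_cases i <;> fin_cases j <;>
        simp [Matrix.one_apply, h01, h10, h, h11]
  · -- commutes with A', anticommutes with B': X = ±diag(i,-i)
    have a01 := congrFun (congrFun hA 0) 1
    have a10 := congrFun (congrFun hA 1) 0
    have c01 := congrFun (congrFun hB 0) 1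
    simp only [Matrix.mul_apply, Fin.sum_univ_two, Matrix.neg_apply, Matrix.of_apply,
      Matrix.cons_val', Matrix.cons_val_zero, Matrix.cons_val_one, Matrix.head_cons,
      Matrix.head_fin_const, Matrix.empty_val', Matrix.cons_val_fin_one, mul_zero, zero_mul,
      add_zero, zero_add, mul_one, one_mul, mul_neg, neg_mul, neg_neg, neg_zero]
      at a01 a10 c01
    have h01 : X 0 1 = 0 := eq_zero_of_antiI' a01
    have h10 : X 1 0 = 0 := eq_zero_of_antiI a10
    have h11 : X 1 1 = -X 0 0 := by linear_combination -c01
    have hsq : X 0 0 * X 0 0 = -1 := by linear_combination -hd + X 0 0 * h11 - X 1 0 * h01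
    rcases sq_eq_neg_one_cases hsq with h | h
    · refine Or.inr (Or.inr (Or.inl ?_))
      ext i j
      fin_cases i <;> fin_cases j <;>
        simp [h01, h10, h, h11]
    · refine Or.inr (Or.inr (Or.inr (Or.inl ?_)))
      ext i j
      fin_cases i <;> fin_cases j <;>
        simp [h01, h10, h, h11]
  · -- anticommutes with A', commutes with B': X = ±[[0,1],[-1,0]]
    have a00 := congrFun (congrFun hA 0) 0
    have a11 := congrFun (congrFun hA 1) 1
    have b00 := congrFun (congrFun hB 0) 0
    simp only [Matrix.mul_apply, Fin.sum_univ_two, Matrix.neg_apply, Matrix.of_apply,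
      Matrix.cons_val', Matrix.cons_val_zero, Matrix.cons_val_one, Matrix.head_cons,
      Matrix.head_fin_const, Matrix.empty_val', Matrix.cons_val_fin_one, mul_zero, zero_mul,
      add_zero, zero_add, mul_one, one_mul, mul_neg, neg_mul, neg_neg, neg_zero]
      at a00 a11 b00
    have h00 : X 0 0 = 0 := eq_zero_of_antiI a00
    have h11 : X 1 1 = 0 := eq_zero_of_antiI' a11
    have h10 : X 1 0 = -X 0 1 := by linear_combination b00
    have hsq : X 0 1 * X 0 1 = 1 := by
      linear_combination hd + X 0 1 * h10 - X 1 1 * h00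
    rcases mul_self_eq_one_iff.mp hsq with h | h
    · refine Or.inr (Or.inr (Or.inr (Or.inr (Or.inl ?_))))
      ext i j
      fin_cases i <;> fin_cases j <;>
        simp [h00, h11, h, h10]
    · refine Or.inr (Or.inr (Or.inr (Or.inr (Or.inr (Or.inl ?_)))))
      ext i j
      fin_cases i <;> fin_cases j <;>
        simp [h00, h11, h, h10]
  · -- anticommutes with both: X = ±[[0,i],[i,0]]
    have a00 := congrFun (congrFun hA 0) 0
    have a11 := congrFun (congrFun hA 1) 1
    have c00 := congrFun (congrFun hB 0) 0
    simp only [Matrix.mul_apply, Fin.sum_univ_two, Matrix.neg_apply, Matrix.of_apply,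
      Matrix.cons_val', Matrix.cons_val_zero, Matrix.cons_val_one, Matrix.head_cons,
      Matrix.head_fin_const, Matrix.empty_val', Matrix.cons_val_fin_one, mul_zero, zero_mul,
      add_zero, zero_add, mul_one, one_mul, mul_neg, neg_mul, neg_neg, neg_zero]
      at a00 a11 c00
    have h00 : X 0 0 = 0 := eq_zero_of_antiI a00
    have h11 : X 1 1 = 0 := eq_zero_of_antiI' a11
    have h10 : X 1 0 = X 0 1 := c00.symm
    have hsq : X 0 1 * X 0 1 = -1 := by
      linear_combination -hd - X 0 1 * h10 + X 1 1 * h00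
    rcases sq_eq_neg_one_cases hsq with h | h
    · refine Or.inr (Or.inr (Or.inr (Or.inr (Or.inr (Or.inr (Or.inl ?_))))))
      ext i j
      fin_cases i <;> fin_cases j <;>
        simp [h00, h11, h, h10]
    · refine Or.inr (Or.inr (Or.inr (Or.inr (Or.inr (Or.inr (Or.inr ?_))))))
      ext i j
      fin_cases i <;> fin_cases j <;>
        simp [h00, h11, h, h10]

def negSL : Matrix.SpecialLinearGroup (Fin 2) ℂ :=
  ⟨(-1 : M2), by simp [Matrix.det_fin_two]⟩

lemma negSL_center : negSL ∈ Subgroup.center (Matrix.SpecialLinearGroup (Fin 2) ℂ) := by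
  refine Subgroup.mem_center_iff.mpr fun x => ?_
  apply Subtype.ext
  show (x.val * (-1) : M2) = (-1) * x.val
  simp

lemma comm_cases (g h : SL2)
    (hyp : ((g * h * g⁻¹ * h⁻¹ : SL2) : M2) = 1 ∨
           ((g * h * g⁻¹ * h⁻¹ : SL2) : M2) = -1) :
    g.val * h.val = h.val * g.val ∨ g.val * h.val = -(h.val * g.val) := by
  rcases hyp with hy | hy
  · left
    have h1 : g * h * g⁻¹ * h⁻¹ = 1 := Subtype.ext hy
    have h2 : g * h = h * g := by
      have h3 : g * h = g * h * g⁻¹ * h⁻¹ * (h * g) := by group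
      rw [h1, one_mul] at h3
      exact h3
    exact congrArg Subtype.val h2
  · right
    have h1 : g * h * g⁻¹ * h⁻¹ = negSL := Subtype.ext hy
    have h2 : g * h = negSL * (h * g) := by
      have h3 : g * h = g * h * g⁻¹ * h⁻¹ * (h * g) := by group
      rw [h1] at h3
      exact h3
    have h4 := congrArg Subtype.val h2
    rw [show (negSL * (h * g)).val = (-1 : M2) * (h.val * g.val) from rfl,
      neg_one_mul] at h4
    exact h4

end Q8Aux

open Q8Aux

set_option maxHeartbeats 3200000 in
theorem conj_into_Q8_of_projectively_abelian_irreducible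
    (G : Subgroup (SpecialLinearGroup (Fin 2) ℂ))
    (habel : ∀ g ∈ G, ∀ h ∈ G,
      ((g * h * g⁻¹ * h⁻¹ : SpecialLinearGroup (Fin 2) ℂ) : Matrix (Fin 2) (Fin 2) ℂ) = 1 ∨
      ((g * h * g⁻¹ * h⁻¹ : SpecialLinearGroup (Fin 2) ℂ) : Matrix (Fin 2) (Fin 2) ℂ) = -1)
    (hirr : ¬ ∃ v : Fin 2 → ℂ, v ≠ 0 ∧ ∀ g ∈ G,
      ∃ c : ℂ, (g : Matrix (Fin 2) (Fin 2) ℂ) *ᵥ v = c • v) :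
    (∃ C : SpecialLinearGroup (Fin 2) ℂ, ∀ g ∈ G,
      ((C * g * C⁻¹ : SpecialLinearGroup (Fin 2) ℂ) : Matrix (Fin 2) (Fin 2) ℂ) ∈ Q8set) ∧
    Nat.card
      (G.map (QuotientGroup.mk' (Subgroup.center (SpecialLinearGroup (Fin 2) ℂ)))) = 4 := by
  classical
  by_cases hcomm : ∀ g ∈ G, ∀ h ∈ G, g * h = h * g
  · exfalso
    apply hirr
    by_cases hsc : ∀ g ∈ G, ∃ c : ℂ,
        (g : Matrix (Fin 2) (Fin 2) ℂ) = c • (1 : Matrix (Fin 2) (Fin 2) ℂ)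
    · refine ⟨![1, 0], ?_, fun g hg => ?_⟩
      · intro h
        have := congrFun h 0
        simp at this
      · obtain ⟨c, hc⟩ := hsc g hg
        exact ⟨c, by rw [hc, Matrix.smul_mulVec, Matrix.one_mulVec]⟩
    · push_neg at hsc
      obtain ⟨g0, hg0G, hg0⟩ := hsc
      obtain ⟨μ, hμ⟩ := Module.End.exists_eigenvalue
        (Matrix.mulVecLin (g0 : Matrix (Fin 2) (Fin 2) ℂ))
      obtain ⟨v, hvmem, hvne⟩ := hμ.exists_hasEigenvector
      have hev : (g0 : Matrix (Fin 2) (Fin 2) ℂ) *ᵥ v = μ • v := by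
        have h1 := Module.End.mem_eigenspace_iff.mp hvmem
        simpa [Matrix.mulVecLin_apply] using h1
      have hBne : (g0 : Matrix (Fin 2) (Fin 2) ℂ) - μ • 1 ≠ 0 := by
        intro h
        exact hg0 μ (sub_eq_zero.mp h)
      have hBv : ((g0 : Matrix (Fin 2) (Fin 2) ℂ) - μ • 1) *ᵥ v = 0 := by
        rw [Matrix.sub_mulVec, hev, Matrix.smul_mulVec, Matrix.one_mulVec, sub_self]
      refine ⟨v, hvne, fun h hh => ?_⟩
      have hcom : (h : Matrix (Fin 2) (Fin 2) ℂ) * g0 = (g0 : Matrix (Fin 2) (Fin 2) ℂ) * h :=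
        congrArg Subtype.val (hcomm h hh g0 hg0G)
      have hBH : ((g0 : Matrix (Fin 2) (Fin 2) ℂ) - μ • 1) * h
          = (h : Matrix (Fin 2) (Fin 2) ℂ) * ((g0 : Matrix (Fin 2) (Fin 2) ℂ) - μ • 1) := by
        rw [sub_mul, mul_sub, hcom, Matrix.smul_mul, one_mul, Matrix.mul_smul, mul_one]
      have hBw : ((g0 : Matrix (Fin 2) (Fin 2) ℂ) - μ • 1) *ᵥ
          ((h : Matrix (Fin 2) (Fin 2) ℂ) *ᵥ v) = 0 := by
        rw [Matrix.mulVec_mulVec, hBH, ← Matrix.mulVec_mulVec, hBv, Matrix.mulVec_zero]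
      obtain ⟨c, hc⟩ := exists_smul_of_cross v ((h : Matrix (Fin 2) (Fin 2) ℂ) *ᵥ v) hvne
        (cross_eq_zero _ v _ hBne hBv hBw)
      exact ⟨c, hc⟩
  · push_neg at hcomm
    obtain ⟨a, haG, b, hbG, hab_ne⟩ := hcomm
    have hABm : a.val * b.val = -(b.val * a.val) := by
      rcases comm_cases a b (habel a haG b hbG) with h | h
      · exact absurd (Subtype.ext h) hab_ne
      · exact h
    have detA : det a.val = 1 := a.2
    have detB : det b.val = 1 := b.2
    have hBAm : b.val * a.val = -(a.val * b.val) := by rw [hABm, neg_neg]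
    have hA2 : a.val * a.val = -1 :=
      sq_eq_neg_one a.val detA (trace_eq_zero_of_anticomm a.val b.val detB hABm)
    have hB2 : b.val * b.val = -1 :=
      sq_eq_neg_one b.val detB (trace_eq_zero_of_anticomm b.val a.val detA hBAm)
    -- a nonzero column of `a + i` is an eigenvector of `a` with eigenvalue `i`
    have hNne : a.val + Complex.I • 1 ≠ 0 := by
      intro h
      have hAI : a.val = -(Complex.I • (1 : Matrix (Fin 2) (Fin 2) ℂ)) := by
        rwa [add_eq_zero_iff_eq_neg] at h
      have hdet : det a.val = -1 := by
        rw [hAI]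
        simp [Matrix.det_fin_two, Complex.I_mul_I]
      rw [detA] at hdet
      norm_num at hdet
    have hex : ∃ e : Fin 2 → ℂ, (a.val + Complex.I • 1) *ᵥ e ≠ 0 := by
      by_contra hcon
      push_neg at hcon
      apply hNne
      ext i j
      have h1 := congrFun (hcon ![1, 0]) i
      have h2 := congrFun (hcon ![0, 1]) i
      rw [Q8Aux.mulVec_apply] at h1 h2
      simp only [Matrix.cons_val_zero, Matrix.cons_val_one, Matrix.head_cons,
        mul_one, mul_zero, add_zero, zero_add, Pi.zero_apply] at h1 h2
      fin_cases j <;> simp [h1, h2]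
    obtain ⟨e, hvne⟩ := hex
    set v : Fin 2 → ℂ := (a.val + Complex.I • 1) *ᵥ e with hvdef
    have hkey : a.val * (a.val + Complex.I • 1) = Complex.I • (a.val + Complex.I • 1) := by
      rw [mul_add, hA2, Matrix.mul_smul, mul_one, smul_add, smul_smul, Complex.I_mul_I,
        neg_smul, one_smul]
      abel
    have hAv : a.val *ᵥ v = Complex.I • v := by
      rw [hvdef, Matrix.mulVec_mulVec, hkey, Matrix.smul_mulVec]
    set bv : Fin 2 → ℂ := b.val *ᵥ v with hbvdef
    have hAbv : a.val *ᵥ bv = (-Complex.I) • bv := by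
      calc a.val *ᵥ bv = (a.val * b.val) *ᵥ v := by rw [hbvdef, Matrix.mulVec_mulVec]
        _ = (-(b.val * a.val)) *ᵥ v := by rw [hABm]
        _ = -(b.val *ᵥ (a.val *ᵥ v)) := by rw [Matrix.neg_mulVec, ← Matrix.mulVec_mulVec]
        _ = -(b.val *ᵥ (Complex.I • v)) := by rw [hAv]
        _ = -(Complex.I • (b.val *ᵥ v)) := by rw [Matrix.mulVec_smul]
        _ = (-Complex.I) • bv := by rw [hbvdef, neg_smul]
    have hBbv : b.val *ᵥ bv = -v := by
      rw [hbvdef, Matrix.mulVec_mulVec, hB2, Matrix.neg_mulVec, Matrix.one_mulVec]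
    have hbvne : bv ≠ 0 := by
      intro h
      have h2 : adjugate b.val *ᵥ bv = v := by
        rw [hbvdef, Matrix.mulVec_mulVec, Matrix.adjugate_mul, detB, one_smul,
          Matrix.one_mulVec]
      rw [h, Matrix.mulVec_zero] at h2
      exact hvne h2.symm
    have hd : v 0 * bv 1 - v 1 * bv 0 ≠ 0 := by
      intro hd0
      obtain ⟨c, hc⟩ := exists_smul_of_cross v bv hvne hd0
      have e1 : a.val *ᵥ bv = (c * Complex.I) • v := by
        rw [hc, Matrix.mulVec_smul, hAv, smul_smul]
      have e2 : a.val *ᵥ bv = (-Complex.I * c) • v := by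
        rw [hAbv, hc, smul_smul]
      have e3 : ((c * Complex.I) - (-Complex.I * c)) • v = 0 := by
        rw [sub_smul, ← e1, ← e2, sub_self]
      rcases smul_eq_zero.mp e3 with h | h
      · have hc0 : c = 0 := by
          have h4 : (2 * Complex.I) * c = 0 := by linear_combination h
          exact (mul_eq_zero.mp h4).resolve_left twoI_ne
        rw [hc0, zero_smul] at hc
        exact hbvne hc
      · exact hvne h
    obtain ⟨t, ht⟩ := IsAlgClosed.exists_pow_nat_eq (v 0 * bv 1 - v 1 * bv 0) (n := 2)
      (by norm_num)
    have htne : t ≠ 0 := by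
      intro h
      rw [h] at ht
      simp only [ne_eq, OfNat.ofNat_ne_zero, not_false_eq_true, zero_pow] at ht
      exact hd ht.symm
    set P : Matrix (Fin 2) (Fin 2) ℂ :=
      !![t⁻¹ * v 0, t⁻¹ * bv 0; t⁻¹ * v 1, t⁻¹ * bv 1] with hPdef
    have detP : det P = 1 := by
      rw [hPdef, Matrix.det_fin_two_of]
      field_simp
      linear_combination -ht
    -- component equations
    have havA0 := congrFun hAv 0
    have havA1 := congrFun hAv 1
    have habv0 := congrFun hAbv 0
    have habv1 := congrFun hAbv 1
    have hbv0 := congrFun hbvdef 0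
    have hbv1 := congrFun hbvdef 1
    have hbbv0 := congrFun hBbv 0
    have hbbv1 := congrFun hBbv 1
    rw [Q8Aux.mulVec_apply] at havA0 havA1 habv0 habv1 hbbv0 hbbv1
    rw [Q8Aux.mulVec_apply] at hbv0 hbv1
    simp only [Pi.smul_apply, smul_eq_mul, Pi.neg_apply] at havA0 havA1 habv0 habv1 hbbv0 hbbv1
    have hAP : a.val * P = P * !![Complex.I, 0; 0, -Complex.I] := by
      rw [hPdef]
      ext i j
      fin_cases i <;> fin_cases j <;>
        simp only [Matrix.mul_apply, Fin.sum_univ_two, Matrix.neg_apply, Matrix.of_apply,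
          Matrix.cons_val', Matrix.cons_val_zero, Matrix.cons_val_one, Matrix.head_cons,
          Matrix.head_fin_const, Matrix.empty_val', Matrix.cons_val_fin_one, Fin.mk_zero,
          Fin.mk_one, Fin.isValue, mul_zero,
          zero_mul, add_zero, zero_add, mul_one, one_mul, mul_neg, neg_mul, neg_neg, neg_zero]
      · linear_combination t⁻¹ * havA0
      · linear_combination t⁻¹ * habv0
      · linear_combination t⁻¹ * havA1
      · linear_combination t⁻¹ * habv1
    have hBP : b.val * P = P * !![(0 : ℂ), -1; 1, 0] := by
      rw [hPdef]
      ext i j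
      fin_cases i <;> fin_cases j <;>
        simp only [Matrix.mul_apply, Fin.sum_univ_two, Matrix.neg_apply, Matrix.of_apply,
          Matrix.cons_val', Matrix.cons_val_zero, Matrix.cons_val_one, Matrix.head_cons,
          Matrix.head_fin_const, Matrix.empty_val', Matrix.cons_val_fin_one, Fin.mk_zero,
          Fin.mk_one, Fin.isValue, mul_zero,
          zero_mul, add_zero, zero_add, mul_one, one_mul, mul_neg, neg_mul, neg_neg, neg_zero]
      · linear_combination -t⁻¹ * hbv0
      · linear_combination t⁻¹ * hbbv0
      · linear_combination -t⁻¹ * hbv1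
      · linear_combination t⁻¹ * hbbv1
    set Qm : Matrix (Fin 2) (Fin 2) ℂ := adjugate P with hQdef
    have hQP : Qm * P = 1 := by rw [hQdef, Matrix.adjugate_mul, detP, one_smul]
    have hPQ : P * Qm = 1 := by rw [hQdef, Matrix.mul_adjugate, detP, one_smul]
    have expand : ∀ Y Z : Matrix (Fin 2) (Fin 2) ℂ, Qm * Y * P * (Qm * Z * P) = Qm * (Y * Z) * P := by
      intro Y Z
      have h1 : P * (Qm * (Z * P)) = Z * P := by rw [← mul_assoc, hPQ, one_mul]
      simp only [mul_assoc, h1]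
    have expand2 : ∀ Y Z : Matrix (Fin 2) (Fin 2) ℂ, P * Y * Qm * (P * Z * Qm) = P * (Y * Z) * Qm := by
      intro Y Z
      have h1 : Qm * (P * (Z * Qm)) = Z * Qm := by rw [← mul_assoc, hQP, one_mul]
      simp only [mul_assoc, h1]
    have hQAP : Qm * a.val * P = !![Complex.I, 0; 0, -Complex.I] := by
      rw [mul_assoc, hAP, ← mul_assoc, hQP, one_mul]
    have hQBP : Qm * b.val * P = !![(0 : ℂ), -1; 1, 0] := by
      rw [mul_assoc, hBP, ← mul_assoc, hQP, one_mul]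
    have hPAQ : P * !![Complex.I, 0; 0, -Complex.I] * Qm = a.val := by
      rw [← hAP, mul_assoc, hPQ, mul_one]
    have hPBQ : P * !![(0 : ℂ), -1; 1, 0] * Qm = b.val := by
      rw [← hBP, mul_assoc, hPQ, mul_one]
    have hJ : (!![0, 1; -1, 0] : Matrix (Fin 2) (Fin 2) ℂ) = -(!![(0 : ℂ), -1; 1, 0]) := by
      ext i j
      fin_cases i <;> fin_cases j <;> simp
    have hK : (!![0, Complex.I; Complex.I, 0] : Matrix (Fin 2) (Fin 2) ℂ) =
        -(!![Complex.I, 0; 0, -Complex.I] * !![(0 : ℂ), -1; 1, 0]) := by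
      ext i j
      fin_cases i <;> fin_cases j <;>
        simp [Matrix.mul_apply, Fin.sum_univ_two]
    have hPABQ : P * (!![Complex.I, 0; 0, -Complex.I] * !![(0 : ℂ), -1; 1, 0]) * Qm
        = a.val * b.val := by
      rw [← expand2, hPAQ, hPBQ]
    have key : ∀ g ∈ G, (Qm * g.val * P ∈ Q8set ∧
        (g = 1 ∨ g = negSL ∨ g = a ∨ g = negSL * a ∨ g = b ∨ g = negSL * b ∨
          g = a * b ∨ g = negSL * (a * b))) := by
      intro g hg
      have hga := comm_cases g a (habel g hg a haG)
      have hgb := comm_cases g b (habel g hg b hbG)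
      have hdetX : det (Qm * g.val * P) = 1 := by
        rw [det_mul, det_mul, hQdef, Matrix.det_adjugate, detP, g.2]
        norm_num
      have eA1 : Qm * g.val * P * (Qm * a.val * P) = Qm * (g.val * a.val) * P := expand _ _
      have eA2 : Qm * a.val * P * (Qm * g.val * P) = Qm * (a.val * g.val) * P := expand _ _
      have eB1 : Qm * g.val * P * (Qm * b.val * P) = Qm * (g.val * b.val) * P := expand _ _
      have eB2 : Qm * b.val * P * (Qm * g.val * P) = Qm * (b.val * g.val) * P := expand _ _
      have hXA : Qm * g.val * P * !![Complex.I, 0; 0, -Complex.I]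
            = !![Complex.I, 0; 0, -Complex.I] * (Qm * g.val * P) ∨
          Qm * g.val * P * !![Complex.I, 0; 0, -Complex.I]
            = -(!![Complex.I, 0; 0, -Complex.I] * (Qm * g.val * P)) := by
        rcases hga with h | h
        · left
          rw [← hQAP, eA1, eA2, h]
        · right
          rw [← hQAP, eA1, eA2, h, mul_neg, neg_mul]
      have hXB : Qm * g.val * P * !![(0 : ℂ), -1; 1, 0]
            = !![(0 : ℂ), -1; 1, 0] * (Qm * g.val * P) ∨
          Qm * g.val * P * !![(0 : ℂ), -1; 1, 0]
            = -(!![(0 : ℂ), -1; 1, 0] * (Qm * g.val * P)) := by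
        rcases hgb with h | h
        · left
          rw [← hQBP, eB1, eB2, h]
        · right
          rw [← hQBP, eB1, eB2, h, mul_neg, neg_mul]
      have hcl := classify (Qm * g.val * P) hdetX hXA hXB
      have hgval : g.val = P * (Qm * g.val * P) * Qm := by
        have h5 : P * (Qm * g.val * P) * Qm = g.val := by
          simp only [← mul_assoc]
          rw [hPQ, one_mul, mul_assoc, hPQ, mul_one]
        exact h5.symm
      constructor
      · rcases hcl with h | h | h | h | h | h | h | h <;> rw [h] <;> simp [Q8set]
      · rcases hcl with h | h | h | h | h | h | h | h
        · left
          apply Subtype.ext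
          rw [hgval, h, mul_one, hPQ]
          rfl
        · right; left
          apply Subtype.ext
          rw [hgval, h, mul_neg_one, neg_mul, hPQ]
          show -(1 : Matrix (Fin 2) (Fin 2) ℂ) = (-1 : Matrix (Fin 2) (Fin 2) ℂ)
          simp
        · right; right; left
          apply Subtype.ext
          rw [hgval, h, hPAQ]
        · right; right; right; left
          apply Subtype.ext
          rw [hgval, h, mul_neg, neg_mul, hPAQ]
          show -(a.val) = (-1 : Matrix (Fin 2) (Fin 2) ℂ) * a.val
          rw [neg_one_mul]
        · right; right; right; right; right; left
          apply Subtype.ext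
          rw [hgval, h, hJ, mul_neg, neg_mul, hPBQ]
          show -(b.val) = (-1 : Matrix (Fin 2) (Fin 2) ℂ) * b.val
          rw [neg_one_mul]
        · right; right; right; right; left
          apply Subtype.ext
          rw [hgval, h, hJ, neg_neg, hPBQ]
        · right; right; right; right; right; right; right
          apply Subtype.ext
          rw [hgval, h, hK, mul_neg, neg_mul, hPABQ]
          show -(a.val * b.val) = (-1 : Matrix (Fin 2) (Fin 2) ℂ) * (a.val * b.val)
          rw [neg_one_mul]
        · right; right; right; right; right; right; left
          apply Subtype.ext
          rw [hgval, h, hK, neg_neg, hPABQ]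
          rfl
    have hS : ∃ S : SpecialLinearGroup (Fin 2) ℂ, S.val = P := ⟨⟨P, detP⟩, rfl⟩
    obtain ⟨S, hSval⟩ := hS
    constructor
    · refine ⟨S⁻¹, fun g hg => ?_⟩
      rw [inv_inv]
      have h2 : ((S⁻¹ * g * S : SpecialLinearGroup (Fin 2) ℂ) : Matrix (Fin 2) (Fin 2) ℂ)
          = adjugate S.val * g.val * S.val := rfl
      rw [h2, hSval, ← hQdef]
      exact (key g hg).1
    · set π := QuotientGroup.mk' (Subgroup.center (SpecialLinearGroup (Fin 2) ℂ)) with hπdef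
      have hπneg : π negSL = 1 := by
        rw [hπdef, QuotientGroup.mk'_apply]
        exact (QuotientGroup.eq_one_iff _).mpr negSL_center
      have hmul : ∀ x : SpecialLinearGroup (Fin 2) ℂ, π (negSL * x) = π x := by
        intro x
        rw [_root_.map_mul, hπneg, one_mul]
      have hsub : ∀ g ∈ G, π g = π 1 ∨ π g = π a ∨ π g = π b ∨ π g = π (a * b) := by
        intro g hg
        rcases (key g hg).2 with h | h | h | h | h | h | h | h
        · left; rw [h]
        · left; rw [h, hπneg, _root_.map_one]
        · right; left; rw [h]
        · right; left; rw [h, hmul]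
        · right; right; left; rw [h]
        · right; right; left; rw [h, hmul]
        · right; right; right; rw [h]
        · right; right; right; rw [h, hmul]
      have hcen : ∀ x y : SpecialLinearGroup (Fin 2) ℂ, π x = π y →
          ∀ z : SpecialLinearGroup (Fin 2) ℂ, z * (x⁻¹ * y) = (x⁻¹ * y) * z := by
        intro x y hxy z
        have h1 : π (x⁻¹ * y) = 1 := by rw [_root_.map_mul, _root_.map_inv, hxy, inv_mul_cancel]
        rw [hπdef, QuotientGroup.mk'_apply] at h1
        exact Subgroup.mem_center_iff.mp ((QuotientGroup.eq_one_iff _).mp h1) z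
      have hnc : ¬ (a * b = b * a) := hab_ne
      have d1 : π a ≠ π 1 := by
        intro h
        have h' := hcen a 1 h b
        rw [mul_one] at h'
        apply hnc
        calc a * b = a * (b * a⁻¹) * a := by group
          _ = a * (a⁻¹ * b) * a := by rw [h']
          _ = b * a := by group
      have d2 : π b ≠ π 1 := by
        intro h
        have h' := hcen b 1 h a
        rw [mul_one] at h'
        apply hnc
        calc a * b = b * (b⁻¹ * a) * b := by group
          _ = b * (a * b⁻¹) * b := by rw [h']
          _ = b * a := by group
      have d3 : π (a * b) ≠ π 1 := by
        intro h
        have h' := hcen (a * b) 1 h a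
        rw [mul_one] at h'
        apply hnc
        symm
        calc b * a = b * (a * (a * b)⁻¹) * (a * b) := by group
          _ = b * ((a * b)⁻¹ * a) * (a * b) := by rw [h']
          _ = a * b := by group
      have d4 : π a ≠ π b := by
        intro h
        have h' := hcen a b h a
        apply hnc
        calc a * b = a * (a * (a⁻¹ * b)) := by group
          _ = a * ((a⁻¹ * b) * a) := by rw [h']
          _ = b * a := by group
      have d5 : π a ≠ π (a * b) := by
        intro h
        have h' := hcen a (a * b) h a
        apply hnc
        calc a * b = a * (a⁻¹ * (a * b)) := by group
          _ = (a⁻¹ * (a * b)) * a := h'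
          _ = b * a := by group
      have d6 : π b ≠ π (a * b) := by
        intro h
        have h' := hcen b (a * b) h b
        apply hnc
        symm
        calc b * a = b * (b * (b⁻¹ * (a * b))) * b⁻¹ := by group
          _ = b * ((b⁻¹ * (a * b)) * b) * b⁻¹ := by rw [h']
          _ = a * b := by group
      have hseteq : ((G.map π : Subgroup _) : Set _) = {π 1, π a, π b, π (a * b)} := by
        ext x
        constructor
        · intro hx
          obtain ⟨g, hg, rfl⟩ := Subgroup.mem_map.mp hx
          rcases hsub g hg with h | h | h | h <;> simp [h]
        · intro hx
          simp only [Set.mem_insert_iff, Set.mem_singleton_iff] at hx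
          rcases hx with h | h | h | h
          · exact h ▸ Subgroup.mem_map.mpr ⟨1, G.one_mem, rfl⟩
          · exact h ▸ Subgroup.mem_map.mpr ⟨a, haG, rfl⟩
          · exact h ▸ Subgroup.mem_map.mpr ⟨b, hbG, rfl⟩
          · exact h ▸ Subgroup.mem_map.mpr ⟨a * b, G.mul_mem haG hbG, rfl⟩
      rw [← SetLike.coe_sort_coe, hseteq, Nat.card_coe_set_eq]
      rw [Set.ncard_insert_of_notMem (by
        intro hm
        simp only [Set.mem_insert_iff, Set.mem_singleton_iff] at hm
        rcases hm with h | h | h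
        exacts [d1 h.symm, d2 h.symm, d3 h.symm])]
      rw [Set.ncard_insert_of_notMem (by
        intro hm
        simp only [Set.mem_insert_iff, Set.mem_singleton_iff] at hm
        rcases hm with h | h
        exacts [d4 h, d5 h])]
      rw [Set.ncard_pair d6]
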